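/- arXiv:0705.0186 — 2 statements merged into one kernel-verified Lean document; each statement's English description precedes it below -/
import Mathlib

section
/- Let C₁ be a ground state at field H₁ and let H₂ > H₁. Let C₂ be any spin configuration that has at least one reverse-flipped spin relative to C₁, i.e., there exists a site i with C₁ i = 1 and C₂ i = -1. Then the configuration C̃ = C₁ ∨ C₂ (pointwise maximum) satisfies E(C̃, H₂) < E(C₂, H₂); in particular C₂ is not a ground state at H₂. -/
open Finset

section RFIM

variable {V : Type*} [Fintype V] [Nonempty V] [DecidableEq V]
variable (G : SimpleGraph V) [DecidableRel G.Adj]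
variable (J : ℝ) (h : V → ℝ)

/-- A spin configuration: every spin is `-1` or `+1`. -/
def IsSpin (σ : V → ℤ) : Prop := ∀ i, σ i = -1 ∨ σ i = 1

/-- The product of the two spins at the endpoints of an (unordered) edge. -/
noncomputable def pairProd (σ : V → ℤ) : Sym2 V → ℝ :=
  Sym2.lift ⟨fun i j => (σ i : ℝ) * (σ j : ℝ), fun i j => by ring⟩

/-- Energy of configuration `σ` at external field `H`. -/
noncomputable def E (σ : V → ℤ) (H : ℝ) : ℝ :=
  -J * (∑ e ∈ G.edgeFinset, pairProd σ e) - ∑ i, (H + h i) * (σ i : ℝ)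

/-- Magnetization. -/
noncomputable def M (σ : V → ℤ) : ℝ := ∑ i, (σ i : ℝ)

/-- Energy at zero field. -/
noncomputable def E₀ (σ : V → ℤ) : ℝ := E G J h σ 0

/-- `σ` is a ground state at field `H`. -/
def IsGroundState (H : ℝ) (σ : V → ℤ) : Prop :=
  IsSpin σ ∧ ∀ τ : V → ℤ, IsSpin τ → E G J h σ H ≤ E G J h τ H

lemma spin_prod_ineq {a b c d : ℤ} (ha : a = -1 ∨ a = 1) (hb : b = -1 ∨ b = 1)
    (hc : c = -1 ∨ c = 1) (hd : d = -1 ∨ d = 1) :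
    a * b + c * d ≤ max a c * max b d + min a c * min b d := by
  rcases ha with ha | ha <;> rcases hb with hb | hb <;> rcases hc with hc | hc <;>
    rcases hd with hd | hd <;> subst ha <;> subst hb <;> subst hc <;> subst hd <;> decide

lemma spin_max {σ τ : V → ℤ} (hσ : IsSpin σ) (hτ : IsSpin τ) :
    IsSpin (fun i => max (σ i) (τ i)) := fun i => by
  rcases hσ i with h | h <;> rcases hτ i with h' | h' <;> simp [h, h']

lemma spin_min {σ τ : V → ℤ} (hσ : IsSpin σ) (hτ : IsSpin τ) :
    IsSpin (fun i => min (σ i) (τ i)) := fun i => by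
  rcases hσ i with h | h <;> rcases hτ i with h' | h' <;> simp [h, h']

lemma pairProd_ineq {σ τ : V → ℤ} (hσ : IsSpin σ) (hτ : IsSpin τ) (e : Sym2 V) :
    pairProd σ e + pairProd τ e ≤
      pairProd (fun i => max (σ i) (τ i)) e + pairProd (fun i => min (σ i) (τ i)) e := by
  induction e using Sym2.ind with
  | _ i j =>
    simp only [pairProd, Sym2.lift_mk]
    have := spin_prod_ineq (hσ i) (hσ j) (hτ i) (hτ j)
    have : ((σ i * σ j + τ i * τ j : ℤ) : ℝ) ≤
        ((max (σ i) (τ i) * max (σ j) (τ j) + min (σ i) (τ i) * min (σ j) (τ j) : ℤ) : ℝ) := by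
      exact_mod_cast this
    push_cast at this ⊢
    linarith

/-- Submodularity of the energy. -/
lemma energy_submodular {σ τ : V → ℤ} (hJ : 0 < J) (hσ : IsSpin σ) (hτ : IsSpin τ) (H : ℝ) :
    E G J h (fun i => max (σ i) (τ i)) H + E G J h (fun i => min (σ i) (τ i)) H ≤
      E G J h σ H + E G J h τ H := by
  unfold E
  have h1 : ∑ e ∈ G.edgeFinset, pairProd σ e + ∑ e ∈ G.edgeFinset, pairProd τ e ≤
      ∑ e ∈ G.edgeFinset, pairProd (fun i => max (σ i) (τ i)) e +
        ∑ e ∈ G.edgeFinset, pairProd (fun i => min (σ i) (τ i)) e := by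
    rw [← Finset.sum_add_distrib, ← Finset.sum_add_distrib]
    exact Finset.sum_le_sum fun e _ => pairProd_ineq hσ hτ e
  have h2 : ∑ i, (H + h i) * ((max (σ i) (τ i) : ℤ) : ℝ) +
      ∑ i, (H + h i) * ((min (σ i) (τ i) : ℤ) : ℝ) =
      ∑ i, (H + h i) * ((σ i : ℤ) : ℝ) + ∑ i, (H + h i) * ((τ i : ℤ) : ℝ) := by
    rw [← Finset.sum_add_distrib, ← Finset.sum_add_distrib]
    refine Finset.sum_congr rfl fun i _ => ?_
    have hmm : ((max (σ i) (τ i) : ℤ) : ℝ) + ((min (σ i) (τ i) : ℤ) : ℝ)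
        = ((σ i : ℤ) : ℝ) + ((τ i : ℤ) : ℝ) := by
      have := max_add_min (σ i) (τ i)
      exact_mod_cast this
    rw [← mul_add, ← mul_add, hmm]
  nlinarith [h1, h2]

lemma E_eq (σ : V → ℤ) (H : ℝ) : E G J h σ H = E G J h σ 0 - H * ∑ i, (σ i : ℝ) := by
  have key : ∑ i, (H + h i) * (σ i : ℝ)
      = ∑ i, (0 + h i) * (σ i : ℝ) + H * ∑ i, (σ i : ℝ) := by
    rw [Finset.mul_sum, ← Finset.sum_add_distrib]
    exact Finset.sum_congr rfl fun i _ => by ring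
  unfold E
  rw [key]
  ring

/-- Any configuration with a reverse-flipped spin relative to a ground state at a
lower field is strictly beaten, at the higher field, by the pointwise maximum;
in particular it is not a ground state there. -/
theorem reverse_flip_not_ground_state
    (hJ : 0 < J) (H₁ H₂ : ℝ) (C₁ C₂ : V → ℤ)
    (h₁ : IsGroundState G J h H₁ C₁) (h₂ : IsSpin C₂)
    (hH : H₁ < H₂) (hrev : ∃ i, C₁ i = 1 ∧ C₂ i = -1) :
    E G J h (fun i => max (C₁ i) (C₂ i)) H₂ < E G J h C₂ H₂ ∧
      ¬ IsGroundState G J h H₂ C₂ := by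
  obtain ⟨hC₁, hgs⟩ := h₁
  set σx : V → ℤ := fun i => max (C₁ i) (C₂ i) with hσx
  set σn : V → ℤ := fun i => min (C₁ i) (C₂ i) with hσn
  have hσxs : IsSpin σx := spin_max hC₁ h₂
  have hσns : IsSpin σn := spin_min hC₁ h₂
  have hsub := energy_submodular G J h hJ hC₁ h₂ H₂
  -- ground state at H₁:
  have hg : E G J h C₁ H₁ ≤ E G J h σn H₁ := hgs σn hσns
  -- magnetization difference positive
  have hM : (0 : ℝ) < ∑ i, (C₁ i : ℝ) - ∑ i, (σn i : ℝ) := by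
    rw [← Finset.sum_sub_distrib]
    obtain ⟨i₀, hi1, hi2⟩ := hrev
    refine Finset.sum_pos' (fun i _ => ?_) ⟨i₀, Finset.mem_univ i₀, ?_⟩
    · have : σn i ≤ C₁ i := min_le_left _ _
      have : (σn i : ℝ) ≤ (C₁ i : ℝ) := by exact_mod_cast this
      linarith
    · have : σn i₀ = -1 := by simp [hσn, hi1, hi2]
      rw [this, hi1]; norm_num
  have key : E G J h C₁ H₂ < E G J h σn H₂ := by
    rw [E_eq G J h C₁ H₂, E_eq G J h σn H₂, E_eq G J h C₁ H₁, E_eq G J h σn H₁] at *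
    nlinarith [hM, hH, hg]
  have main : E G J h σx H₂ < E G J h C₂ H₂ := by linarith
  refine ⟨main, fun hgs₂ => ?_⟩
  exact absurd (hgs₂.2 σx hσxs) (not_le.mpr main)

end RFIM
end

section
/- No-passing rule for the ground-state evolution of the random-field Ising model (increasing field): if C₁ is a ground state at field H₁ and C₂ is a ground state at field H₂ with H₁ < H₂, then for every site i, C₁ i = 1 implies C₂ i = 1 (equivalently C₁ i ≤ C₂ i for all i); flipped spins never flip back as the field is increased. This holds even when ground states are degenerate. -/
open Finset

section RFIM

variable {V : Type*} [Fintype V] [Nonempty V] [DecidableEq V]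
variable (G : SimpleGraph V) [DecidableRel G.Adj]
variable (J : ℝ) (h : V → ℝ)

lemma E_decomp (σ : V → ℤ) (H : ℝ) :
    E G J h σ H = E G J h σ 0 - H * M σ := by
  simp only [E, M, add_mul, Finset.sum_add_distrib, Finset.mul_sum, zero_add, zero_mul,
    Finset.sum_const_zero]
  ring

lemma pairProd_submod (σ τ : V → ℤ) (hσ : IsSpin σ) (hτ : IsSpin τ) (e : Sym2 V) :
    pairProd σ e + pairProd τ e ≤
      pairProd (fun i => max (σ i) (τ i)) e + pairProd (fun i => min (σ i) (τ i)) e := by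
  induction e using Sym2.ind with
  | _ i j =>
    simp only [pairProd, Sym2.lift_mk]
    rcases hσ i with h1 | h1 <;> rcases hτ i with h2 | h2 <;>
      rcases hσ j with h3 | h3 <;> rcases hτ j with h4 | h4 <;>
      simp [h1, h2, h3, h4] <;> norm_num

/-- No-passing rule (increasing field): flipped spins never flip back as the
external field is increased; this holds even for degenerate ground states. -/
theorem no_passing_increasing
    (hJ : 0 < J) (H₁ H₂ : ℝ) (C₁ C₂ : V → ℤ)
    (h₁ : IsGroundState G J h H₁ C₁) (h₂ : IsGroundState G J h H₂ C₂)
    (hH : H₁ < H₂) :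
    ∀ i, C₁ i = 1 → C₂ i = 1 := by
  obtain ⟨s₁, g₁⟩ := h₁
  obtain ⟨s₂, g₂⟩ := h₂
  set τmax : V → ℤ := fun i => max (C₁ i) (C₂ i) with hτmax
  set τmin : V → ℤ := fun i => min (C₁ i) (C₂ i) with hτmin
  have spinmax : IsSpin τmax := by
    intro i; rcases s₁ i with a | a <;> rcases s₂ i with b | b <;> simp [τmax, a, b]
  have spinmin : IsSpin τmin := by
    intro i; rcases s₁ i with a | a <;> rcases s₂ i with b | b <;> simp [τmin, a, b]
  -- submodularity of the zero-field energy
  have hedge : ∑ e ∈ G.edgeFinset, pairProd C₁ e + ∑ e ∈ G.edgeFinset, pairProd C₂ e ≤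
      ∑ e ∈ G.edgeFinset, pairProd τmax e + ∑ e ∈ G.edgeFinset, pairProd τmin e := by
    rw [← Finset.sum_add_distrib, ← Finset.sum_add_distrib]
    exact Finset.sum_le_sum fun e _ => pairProd_submod C₁ C₂ s₁ s₂ e
  have hfield : ∀ i, (τmax i : ℝ) + (τmin i : ℝ) = (C₁ i : ℝ) + (C₂ i : ℝ) := by
    intro i
    have : τmax i + τmin i = C₁ i + C₂ i := max_add_min _ _
    exact_mod_cast congrArg (fun z : ℤ => (z : ℝ)) this
  have submod : E G J h τmax 0 + E G J h τmin 0 ≤ E G J h C₁ 0 + E G J h C₂ 0 := by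
    simp only [E, zero_add]
    have hf : ∑ i, h i * (τmax i : ℝ) + ∑ i, h i * (τmin i : ℝ) =
        ∑ i, h i * (C₁ i : ℝ) + ∑ i, h i * (C₂ i : ℝ) := by
      rw [← Finset.sum_add_distrib, ← Finset.sum_add_distrib]
      exact Finset.sum_congr rfl fun i _ => by rw [← mul_add, ← mul_add, hfield]
    nlinarith [hedge, hJ]
  have hM : M τmax + M τmin = M C₁ + M C₂ := by
    simp only [M]
    rw [← Finset.sum_add_distrib, ← Finset.sum_add_distrib]
    exact Finset.sum_congr rfl fun i _ => hfield i
  have e₁ : E G J h C₁ H₁ ≤ E G J h τmin H₁ := g₁ τmin spinmin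
  have e₂ : E G J h C₂ H₂ ≤ E G J h τmax H₂ := g₂ τmax spinmax
  rw [E_decomp G J h C₁ H₁, E_decomp G J h τmin H₁] at e₁
  rw [E_decomp G J h C₂ H₂, E_decomp G J h τmax H₂] at e₂
  -- conclude M τmax ≤ M C₂
  have key : H₁ * M τmin + H₂ * M τmax ≤ H₁ * M C₁ + H₂ * M C₂ := by linarith
  have hMin : M τmin = M C₁ + M C₂ - M τmax := by linarith
  rw [hMin] at key
  have hMle : M τmax ≤ M C₂ := by nlinarith [key, sub_pos.mpr hH]
  have hpt : ∀ i ∈ (Finset.univ : Finset V), (C₂ i : ℝ) ≤ (τmax i : ℝ) := by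
    intro i _
    exact_mod_cast (le_max_right (C₁ i) (C₂ i))
  have hsum : ∑ i, (C₂ i : ℝ) = ∑ i, (τmax i : ℝ) :=
    le_antisymm (Finset.sum_le_sum hpt) hMle
  have heq : ∀ i ∈ (Finset.univ : Finset V), (C₂ i : ℝ) = (τmax i : ℝ) :=
    (Finset.sum_eq_sum_iff_of_le hpt).mp hsum
  intro i hi
  have := heq i (Finset.mem_univ i)
  have h2 : C₂ i = τmax i := by exact_mod_cast this
  have : (1 : ℤ) ≤ C₂ i := by
    rw [h2]; simp [τmax, hi]
  rcases s₂ i with a | a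
  · omega
  · exact a

end RFIM
end
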